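/- Let ε(N), ε(N-1), …, ε(1) be positive reals. For a vector x ∈ [0,∞]^N with exactly m infinite components (0 ≤ m ≤ N-1), define T(m,x) = x_(N)/ε(N) + Σ_{i=1}^{N-m-1} (x_(N-i) - x_(N-i+1))/ε(N-i), where x_(j) denotes the j-th largest component. Consider the deterministic dynamics in which, at each regular time t, every component i with x_i(t) > 0 (including infinite components) decreases at rate ε(|M(t)|) where M(t) = {i : x_i(t) > 0}, and components that hit 0 stay at 0. Then all finite components of x(t) reach 0 exactly at time T(m, x(0)), i.e., T(m,x(0)) = inf{t : x_i(t) = 0 for all finite components i}. -/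

import Mathlib

open scoped Classical

/-- The `j`-th smallest value (0-indexed) of the finite vector `x`, and `0` out of range. -/
noncomputable def sortedAsc {n : ℕ} (x : Fin n → ℝ) : ℕ → ℝ :=
  fun j => if h : j < n then (x ∘ Tuple.sort x) ⟨j, h⟩ else 0

/-- The draining time `T(m,x)` of Proposition 3.1, expressed via the finite components
of `x` sorted ascendingly: `T(m,x) = x₍N₎/ε(N) + ∑_{i=1}^{N-m-1} (x₍N-i₎-x₍N-i+1₎)/ε(N-i)`. -/
noncomputable def drainTime (N m : ℕ) (ε : ℕ → ℝ) {n : ℕ} (x : Fin n → ℝ) : ℝ :=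
  sortedAsc x 0 / ε N +
    ∑ i ∈ Finset.range (n - 1), (sortedAsc x (i + 1) - sortedAsc x i) / ε (N - 1 - i)

/-- for the piecewise-linear dynamics in which every strictly positive
component decreases at rate `ε(|M(t)|)` (where `M(t)` counts the `m` infinite components
together with the positive finite ones) and components absorbed at `0` stay at `0`,
all finite components hit `0` exactly at time `T(m, x(0))`. -/
theorem finite_components_hit_zero_at_drainTime
    (N m : ℕ) (hN : 0 < N) (hm : m ≤ N - 1)
    (ε : ℕ → ℝ) (hε : ∀ k, 1 ≤ k → k ≤ N → 0 < ε k)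
    (x : ℝ → Fin (N - m) → ℝ)
    (hcont : ∀ i, Continuous fun t => x t i)
    (hnonneg : ∀ t, 0 ≤ t → ∀ i, 0 ≤ x t i)
    (hderiv : ∀ t, 0 ≤ t → ∀ i, 0 < x t i →
      HasDerivWithinAt (fun s => x s i)
        (-(ε (m + (Finset.univ.filter fun j => 0 < x t j).card))) (Set.Ici t) t)
    (hzero : ∀ t, 0 ≤ t → ∀ i, x t i = 0 → ∀ s, t ≤ s → x s i = 0) :
    sInf {t : ℝ | 0 ≤ t ∧ ∀ i, x t i = 0} = drainTime N m ε (x 0) := by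
  classical
  have hn : 0 < N - m := by omega
  have hmn : m + (N - m) = N := by omega
  -- the count of positive components
  set c : ℝ → ℕ := fun t => (Finset.univ.filter fun j => 0 < x t j).card with hc_def
  have hcn : ∀ t, c t ≤ (N - m) := by
    intro t
    calc c t ≤ Finset.univ.card := Finset.card_filter_le _ _
    _ = (N - m) := by simp
  have hc1 : ∀ t (i : Fin (N - m)), 0 < x t i → 1 ≤ c t := by
    intro t i hi
    apply Finset.card_pos.2
    exact ⟨i, by simpa using hi⟩
  -- a uniform positive lower bound on the rates
  obtain ⟨δ, hδpos, hδle⟩ : ∃ δ : ℝ, 0 < δ ∧ ∀ k, 1 ≤ k → k ≤ N → δ ≤ ε k := by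
    refine ⟨(Finset.Icc 1 N).inf' ⟨1, by simp [Finset.mem_Icc]; omega⟩ ε, ?_, ?_⟩
    · refine (Finset.lt_inf'_iff ..).2 ?_
      intro k hk
      rw [Finset.mem_Icc] at hk
      exact hε k hk.1 hk.2
    · intro k h1 h2
      exact Finset.inf'_le _ (Finset.mem_Icc.2 ⟨h1, h2⟩)
  have hrate : ∀ t (i : Fin (N - m)), 0 < x t i → δ ≤ ε (m + c t) := by
    intro t i hi
    exact hδle _ (le_trans (hc1 t i hi) (by omega)) (by have := hcn t; omega)
  -- pairwise constancy of differences while both positive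
  have W : ∀ (i j : Fin (N - m)) (s t : ℝ), 0 ≤ s → s ≤ t →
      (∀ u ∈ Set.Ico s t, 0 < x u i) → (∀ u ∈ Set.Ico s t, 0 < x u j) →
      x t i - x t j = x s i - x s j := by
    intro i j s t hs hst hi hj
    have := constant_of_has_deriv_right_zero (f := fun u => x u i - x u j) (a := s) (b := t)
      (((hcont i).sub (hcont j)).continuousOn) ?_ t (Set.right_mem_Icc.2 hst)
    · exact this
    · intro u hu
      have hu0 : 0 ≤ u := hs.trans hu.1
      have h1 := hderiv u hu0 i (hi u hu)
      have h2 := hderiv u hu0 j (hj u hu)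
      have h3 := h1.sub h2
      rw [sub_self] at h3
      exact h3
  -- uniform linear decrease while positive
  have Wdec : ∀ (i : Fin (N - m)) (s t : ℝ), 0 ≤ s → s ≤ t → (∀ u ∈ Set.Ico s t, 0 < x u i) →
      x t i ≤ x s i - δ * (t - s) := by
    intro i s t hs hst hi
    have hB : ∀ u : ℝ, HasDerivAt (fun v : ℝ => x s i - δ * (v - s)) (-δ) u := by
      intro u
      have h1 : HasDerivAt (fun v : ℝ => δ * (v - s)) (δ * 1) u :=
        ((hasDerivAt_id u).sub_const s).const_mul δ
      simpa using h1.const_sub (x s i)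
    have := image_le_of_deriv_right_le_deriv_boundary (f := fun u => x u i)
      (f' := fun u => -(ε (m + c u))) (B := fun v => x s i - δ * (v - s)) (B' := fun _ => -δ)
      ((hcont i).continuousOn)
      (fun u hu => hderiv u (hs.trans hu.1) i (hi u hu))
      (by simp)
      (fun u _ => (hB u).continuousAt.continuousWithinAt)
      (fun u hu => (hB u).hasDerivWithinAt)
      (fun u hu => neg_le_neg (hrate u i (hi u hu)))
      (Set.right_mem_Icc.2 hst)
    exact this
  -- global monotonicity
  have hmono : ∀ (i : Fin (N - m)) (s t : ℝ), 0 ≤ s → s ≤ t → x t i ≤ x s i := by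
    intro i s t hs hst
    by_cases hxt : x t i = 0
    · rw [hxt]; exact hnonneg s hs i
    · have hpos : ∀ u ∈ Set.Ico s t, 0 < x u i := by
        intro u hu
        rcases lt_or_eq_of_le (hnonneg u (hs.trans hu.1) i) with h | h
        · exact h
        · exact absurd (hzero u (hs.trans hu.1) i h.symm t hu.2.le) hxt
      have h1 := Wdec i s t hs hst hpos
      have h2 : 0 ≤ δ * (t - s) := mul_nonneg hδpos.le (by linarith)
      linarith
  -- hitting times
  have hZclosed : ∀ i : Fin (N - m), IsClosed {t : ℝ | 0 ≤ t ∧ x t i = 0} := by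
    intro i
    exact isClosed_Ici.inter (isClosed_eq (hcont i) continuous_const)
  have hZbdd : ∀ i : Fin (N - m), BddBelow {t : ℝ | 0 ≤ t ∧ x t i = 0} :=
    fun i => ⟨0, fun t ht => ht.1⟩
  have hZne : ∀ i : Fin (N - m), {t : ℝ | 0 ≤ t ∧ x t i = 0}.Nonempty := by
    intro i
    by_contra h
    rw [Set.not_nonempty_iff_eq_empty] at h
    have hpos : ∀ t, 0 ≤ t → 0 < x t i := by
      intro t ht
      rcases lt_or_eq_of_le (hnonneg t ht i) with h' | h'
      · exact h'
      · exfalso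
        have hmem : t ∈ {t : ℝ | 0 ≤ t ∧ x t i = 0} := ⟨ht, h'.symm⟩
        rw [h] at hmem
        exact hmem
    set T : ℝ := x 0 i / δ + 1 with hT_def
    have hT0 : 0 ≤ T := by
      have hx0 := hnonneg 0 le_rfl i
      have hq := div_nonneg hx0 hδpos.le
      rw [hT_def]
      linarith
    have h1 := Wdec i 0 T le_rfl hT0 (fun u hu => hpos u hu.1)
    have h2 : δ * T = x 0 i + δ := by
      have h4 : x 0 i / δ * δ = x 0 i := div_mul_cancel₀ _ hδpos.ne'
      rw [hT_def]; linear_combination h4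
    have h3 := hpos T hT0
    rw [sub_zero] at h1
    linarith
  set τ : Fin (N - m) → ℝ := fun i => sInf {t : ℝ | 0 ≤ t ∧ x t i = 0} with hτ_def
  have hτmem : ∀ i : Fin (N - m), 0 ≤ τ i ∧ x (τ i) i = 0 :=
    fun i => (hZclosed i).csInf_mem (hZne i) (hZbdd i)
  have hτle : ∀ (i : Fin (N - m)) t, 0 ≤ t → x t i = 0 → τ i ≤ t :=
    fun i t ht hx => csInf_le (hZbdd i) ⟨ht, hx⟩
  have hτpos : ∀ (i : Fin (N - m)) t, 0 ≤ t → t < τ i → 0 < x t i := by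
    intro i t ht hlt
    rcases lt_or_eq_of_le (hnonneg t ht i) with h | h
    · exact h
    · exact absurd (hτle i t ht h.symm) (not_le.2 hlt)
  have hτafter : ∀ (i : Fin (N - m)) t, τ i ≤ t → x t i = 0 :=
    fun i t ht => hzero (τ i) (hτmem i).1 i (hτmem i).2 t ht
  -- the sorted initial condition
  set σ : Equiv.Perm (Fin (N - m)) := Tuple.sort (x 0) with hσ_def
  have hGmono : Monotone (x 0 ∘ σ) := Tuple.monotone_sort (x 0)
  set g : ℕ → ℝ := sortedAsc (x 0) with hg_def
  have hg : ∀ (j : ℕ) (h : j < (N - m)), g j = x 0 (σ ⟨j, h⟩) := by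
    intro j h
    simp only [hg_def, sortedAsc, dif_pos h]
    rfl
  set istar : Fin (N - m) := σ ⟨(N - m) - 1, by omega⟩ with histar_def
  have hmax : ∀ j : Fin (N - m), x 0 j ≤ x 0 istar := by
    intro j
    have h1 : x 0 j = (x 0 ∘ σ) (σ.symm j) := by simp
    rw [h1, histar_def]
    apply hGmono
    have h2 := (σ.symm j).isLt
    simp only [Fin.le_def, Fin.val_mk]
    omega
  -- order preservation
  have hle : ∀ (j : Fin (N - m)) (t : ℝ), 0 ≤ t → x t j ≤ x t istar := by
    intro j t ht
    by_cases h0 : x t j = 0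
    · rw [h0]; exact hnonneg t ht istar
    · have hjt : 0 < x t j := lt_of_le_of_ne (hnonneg t ht j) (Ne.symm h0)
      have hjpos : ∀ u, 0 ≤ u → u ≤ t → 0 < x u j := by
        intro u hu hut
        rcases lt_or_eq_of_le (hnonneg u hu j) with h | h
        · exact h
        · exact absurd (hzero u hu j h.symm t hut) h0
      by_cases hstar : ∀ u ∈ Set.Ico (0:ℝ) t, 0 < x u istar
      · have := W j istar 0 t le_rfl ht (fun u hu => hjpos u hu.1 hu.2.le) hstar
        have := hmax j
        linarith
      · push_neg at hstar
        obtain ⟨u, hu, hu0⟩ := hstar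
        have hxu : x u istar = 0 := le_antisymm hu0 (hnonneg u hu.1 istar)
        have hτu : τ istar ≤ u := hτle istar u hu.1 hxu
        have hvt : τ istar < t := lt_of_le_of_lt hτu hu.2
        have hW := W j istar 0 (τ istar) le_rfl (hτmem istar).1
          (fun v hv => hjpos v hv.1 (hv.2.le.trans hvt.le))
          (fun v hv => hτpos istar v hv.1 hv.2)
        rw [(hτmem istar).2] at hW
        have h1 := hjpos (τ istar) (hτmem istar).1 hvt.le
        have h2 := hmax j
        linarith
  have hτjle : ∀ j : Fin (N - m), τ j ≤ τ istar := by
    intro j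
    apply hτle j (τ istar) (hτmem istar).1
    have h1 := hle j (τ istar) (hτmem istar).1
    rw [(hτmem istar).2] at h1
    exact le_antisymm h1 (hnonneg _ (hτmem istar).1 j)
  -- the drained amount D
  set D : ℝ → ℝ := fun t => x 0 istar - x t istar with hD_def
  have hDcont : Continuous D := continuous_const.sub (hcont istar)
  have hD0 : D 0 = 0 := by simp [hD_def]
  have hDmono : ∀ s t : ℝ, 0 ≤ s → s ≤ t → D s ≤ D t := by
    intro s t hs hst
    have := hmono istar s t hs hst
    simp only [hD_def]
    linarith
  have hDτ : D (τ istar) = x 0 istar := by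
    simp [hD_def, (hτmem istar).2]
  -- the explicit formula for components while alive
  have hformula : ∀ (j : Fin (N - m)) (t : ℝ), 0 ≤ t → t ≤ τ j → x t j = x 0 j - D t := by
    intro j t ht htj
    have hW := W j istar 0 t le_rfl ht
      (fun u hu => hτpos j u hu.1 (lt_of_lt_of_le hu.2 htj))
      (fun u hu => hτpos istar u hu.1 (lt_of_lt_of_le hu.2 (htj.trans (hτjle j))))
    simp only [hD_def]
    linarith
  have hDhit : ∀ j : Fin (N - m), D (τ j) = x 0 j := by
    intro j
    have := hformula j (τ j) (hτmem j).1 le_rfl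
    rw [(hτmem j).2] at this
    linarith
  -- positivity criterion
  have hposiff : ∀ (j : Fin (N - m)) (t : ℝ), 0 ≤ t → (0 < x t j ↔ D t < x 0 j) := by
    intro j t ht
    constructor
    · intro h
      have htj : t ≤ τ j := by
        by_contra hc
        push_neg at hc
        rw [hτafter j t hc.le] at h
        exact lt_irrefl 0 h
      have := hformula j t ht htj
      linarith
    · intro h
      rcases lt_or_eq_of_le (hnonneg t ht j) with h' | h'
      · exact h'
      · have hτj : τ j ≤ t := hτle j t ht h'.symm
        have := hDmono (τ j) t (hτmem j).1 hτj
        rw [hDhit j] at this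
        linarith
  have hcard : ∀ t : ℝ, 0 ≤ t →
      c t = (Finset.univ.filter fun j : Fin (N - m) => D t < x 0 j).card := by
    intro t ht
    simp only [hc_def]
    congr 1
    apply Finset.filter_congr
    intro j _
    exact hposiff j t ht
  -- the derivative of D
  have hDderiv : ∀ t : ℝ, 0 ≤ t → t < τ istar →
      HasDerivWithinAt D (ε (m + c t)) (Set.Ici t) t := by
    intro t ht hlt
    have h1 := hderiv t ht istar (hτpos istar t ht hlt)
    have h2 := h1.const_sub (x 0 istar)
    rw [neg_neg] at h2
    exact h2
  -- segment lemma: if the count is constant on a segment, D is linear there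
  have SL : ∀ (s t : ℝ) (k : ℕ), 0 ≤ s → s ≤ t → t ≤ τ istar →
      (∀ u ∈ Set.Ico s t, c u = k) → D t - D s = ε (m + k) * (t - s) := by
    intro s t k hs hst htτ hcount
    have hlin : ∀ u : ℝ, HasDerivAt (fun v : ℝ => ε (m + k) * v) (ε (m + k)) u := by
      intro u
      simpa using (hasDerivAt_id u).const_mul (ε (m + k))
    have := constant_of_has_deriv_right_zero (f := fun u => D u - ε (m + k) * u)
      (a := s) (b := t)
      ((hDcont.sub (continuous_const.mul continuous_id)).continuousOn) ?_ t
      (Set.right_mem_Icc.2 hst)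
    · have h' : D t - ε (m + k) * t = D s - ε (m + k) * s := this
      linear_combination h'
    · intro u hu
      have hu0 : 0 ≤ u := hs.trans hu.1
      have h1 := hDderiv u hu0 (lt_of_lt_of_le hu.2 htτ)
      rw [hcount u hu] at h1
      have h2 := h1.sub (hlin u).hasDerivWithinAt
      rw [sub_self] at h2
      exact h2
  -- basic facts about the sorted values
  have hgmem : ∀ (k : ℕ), k < (N - m) → 0 ≤ g k ∧ g k ≤ x 0 istar := by
    intro k hk
    rw [hg k hk]
    refine ⟨hnonneg 0 le_rfl _, hmax _⟩
  have hgmono : ∀ (j k : ℕ) (hk : k < (N - m)), j ≤ k → g j ≤ g k := by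
    intro j k hk hjk
    rw [hg j (lt_of_le_of_lt hjk hk), hg k hk]
    exact hGmono (by simp only [Fin.mk_le_mk]; exact hjk)
  -- crossing times
  set tk : ℕ → ℝ := fun k => sInf {t : ℝ | 0 ≤ t ∧ D t = g k} with htk_def
  have htkfacts : ∀ k : ℕ, k < (N - m) →
      (0 ≤ tk k ∧ D (tk k) = g k) ∧ tk k ≤ τ istar ∧
      (∀ t, 0 ≤ t → g k ≤ D t → tk k ≤ t) := by
    intro k hk
    have hclosed : IsClosed {t : ℝ | 0 ≤ t ∧ D t = g k} :=
      isClosed_Ici.inter (isClosed_eq hDcont continuous_const)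
    have hbdd : BddBelow {t : ℝ | 0 ≤ t ∧ D t = g k} := ⟨0, fun t ht => ht.1⟩
    obtain ⟨u, hu, hDu⟩ : ∃ u ∈ Set.Icc 0 (τ istar), D u = g k := by
      have : g k ∈ Set.Icc (D 0) (D (τ istar)) := by
        rw [hD0, hDτ]
        exact ⟨(hgmem k hk).1, (hgmem k hk).2⟩
      exact intermediate_value_Icc (hτmem istar).1 hDcont.continuousOn this
    have hne : {t : ℝ | 0 ≤ t ∧ D t = g k}.Nonempty := ⟨u, hu.1, hDu⟩
    have hmem := hclosed.csInf_mem hne hbdd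
    refine ⟨⟨hmem.1, hmem.2⟩, ?_, ?_⟩
    · exact le_trans (csInf_le hbdd ⟨hu.1, hDu⟩) hu.2
    · intro t ht hgt
      obtain ⟨v, hv, hDv⟩ : ∃ v ∈ Set.Icc 0 t, D v = g k := by
        have : g k ∈ Set.Icc (D 0) (D t) := by
          rw [hD0]
          exact ⟨(hgmem k hk).1, hgt⟩
        exact intermediate_value_Icc ht hDcont.continuousOn this
      exact le_trans (csInf_le hbdd ⟨hv.1, hDv⟩) hv.2
  have htklt : ∀ (k : ℕ), k < (N - m) → ∀ t, 0 ≤ t → t < tk k → D t < g k := by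
    intro k hk t ht hlt
    by_contra h
    push_neg at h
    exact absurd ((htkfacts k hk).2.2 t ht h) (not_le.2 hlt)
  -- the last crossing time is the global hitting time
  have hglast : g ((N - m) - 1) = x 0 istar := by
    rw [hg ((N - m)-1) (by omega), histar_def]
  have htklast : tk ((N - m) - 1) = τ istar := by
    refine le_antisymm ((htkfacts ((N - m)-1) (by omega)).2.1 ) ?_
    have h1 : D (tk ((N - m)-1)) = g ((N - m)-1) := ((htkfacts ((N - m)-1) (by omega)).1).2
    rw [hglast] at h1
    have h2 : x (tk ((N - m)-1)) istar = 0 := by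
      simp only [hD_def] at h1
      linarith
    exact hτle istar (tk ((N - m)-1)) ((htkfacts ((N - m)-1) (by omega)).1).1 h2
  -- counting: the number of components above a level
  have hcount_above : ∀ (r : ℝ) (k : ℕ), k + 1 < (N - m) → g k ≤ r → r < g (k + 1) →
      (Finset.univ.filter fun j : Fin (N - m) => r < x 0 j).card = (N - m) - (k + 1) := by
    intro r k hk hgk hgk1
    have h1 : (Finset.univ.filter fun j : Fin (N - m) => r < x 0 j).card
        = (Finset.univ.filter fun l : Fin (N - m) => r < x 0 (σ l)).card := by
      simp only [← Fintype.card_subtype]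
      exact (Fintype.card_congr (σ.subtypeEquiv (fun l => Iff.rfl))).symm
    rw [h1]
    have h2 : (Finset.univ.filter fun l : Fin (N - m) => r < x 0 (σ l))
        = Finset.univ.filter fun l : Fin (N - m) => k < (l : ℕ) := by
      apply Finset.filter_congr
      intro l _
      constructor
      · intro h
        by_contra hc
        push_neg at hc
        have : x 0 (σ l) ≤ g k := by
          rw [hg k (by omega)]
          have h2 := l.isLt
          exact hGmono (by simp only [Fin.le_def, Fin.val_mk]; omega)
        linarith
      · intro h
        have : g (k+1) ≤ x 0 (σ l) := by
          rw [hg (k+1) hk]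
          exact hGmono (by simp only [Fin.le_def, Fin.val_mk]; omega)
        linarith
    rw [h2]
    rw [Finset.card_filter]
    rw [Fin.sum_univ_eq_sum_range (fun l => if k < l then 1 else 0)]
    rw [← Finset.card_filter]
    have : (Finset.range (N - m)).filter (fun l => k < l) = Finset.Ico (k+1) (N - m) := by
      ext a; simp [Finset.mem_Ico, Finset.mem_range]; omega
    rw [this, Nat.card_Ico]
  have hcount_below : ∀ r : ℝ, r < g 0 →
      (Finset.univ.filter fun j : Fin (N - m) => r < x 0 j).card = (N - m) := by
    intro r hr
    have : (Finset.univ.filter fun j : Fin (N - m) => r < x 0 j) = Finset.univ := by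
      apply Finset.filter_true_of_mem
      intro j _
      have h1 : x 0 j = (x 0 ∘ σ) (σ.symm j) := by simp
      have h2 : g 0 ≤ x 0 j := by
        rw [h1, hg 0 hn]
        exact hGmono (by simp only [Fin.le_def, Fin.val_mk]; omega)
      linarith
    rw [this]
    simp
  -- the first segment
  have hstep0 : g 0 = ε N * tk 0 := by
    have h0 := (htkfacts 0 hn).1
    have hcount : ∀ u ∈ Set.Ico (0:ℝ) (tk 0), c u = (N - m) := by
      intro u hu
      rw [hcard u hu.1, hcount_below (D u) (htklt 0 hn u hu.1 hu.2)]
    have := SL 0 (tk 0) (N - m) le_rfl h0.1 ((htkfacts 0 hn).2.1) hcount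
    rw [hD0, h0.2, hmn] at this
    linarith
  -- the later segments
  have hstepk : ∀ k : ℕ, k + 1 < (N - m) →
      g (k+1) - g k = ε (N - 1 - k) * (tk (k+1) - tk k) := by
    intro k hk
    have hk' : k < (N - m) := by omega
    have hfk := (htkfacts k hk').1
    have hfk1 := (htkfacts (k+1) hk).1
    have hmono' : tk k ≤ tk (k+1) := by
      apply (htkfacts k hk').2.2 (tk (k+1)) hfk1.1
      rw [hfk1.2]
      exact hgmono k (k+1) hk (by omega)
    have hcount : ∀ u ∈ Set.Ico (tk k) (tk (k+1)), c u = (N - m) - (k+1) := by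
      intro u hu
      have hu0 : 0 ≤ u := hfk.1.trans hu.1
      rw [hcard u hu0]
      apply hcount_above (D u) k hk
      · rw [← hfk.2]
        exact hDmono (tk k) u hfk.1 hu.1
      · exact htklt (k+1) hk u hu0 hu.2
    have := SL (tk k) (tk (k+1)) ((N - m) - (k+1)) hfk.1 hmono' ((htkfacts (k+1) hk).2.1) hcount
    rw [hfk.2, hfk1.2] at this
    have harith : m + ((N - m) - (k + 1)) = N - 1 - k := by omega
    rw [harith] at this
    exact this
  -- reduce the goal to τ istar
  have hSet : {t : ℝ | 0 ≤ t ∧ ∀ i, x t i = 0} = {t : ℝ | 0 ≤ t ∧ x t istar = 0} := by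
    ext t
    constructor
    · rintro ⟨ht, h⟩
      exact ⟨ht, h istar⟩
    · rintro ⟨ht, h⟩
      refine ⟨ht, fun i => ?_⟩
      have h1 := hle i t ht
      rw [h] at h1
      exact le_antisymm h1 (hnonneg t ht i)
  rw [hSet]
  show τ istar = drainTime N m ε (x 0)
  -- positivity of the relevant rates
  have hεN : ε N ≠ 0 := ne_of_gt (hε N (by omega) le_rfl)
  have hεk : ∀ k : ℕ, k + 1 < (N - m) → ε (N - 1 - k) ≠ 0 := by
    intro k hk
    exact ne_of_gt (hε (N - 1 - k) (by omega) (by omega))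
  -- telescope
  have htel : tk ((N - m) - 1) = tk 0 + ∑ k ∈ Finset.range ((N - m) - 1), (tk (k+1) - tk k) := by
    rw [Finset.sum_range_sub (fun k => tk k)]
    ring
  rw [← htklast, htel]
  have h1 : tk 0 = g 0 / ε N := by
    rw [hstep0]
    field_simp
  have h2 : ∀ k ∈ Finset.range ((N - m) - 1), tk (k+1) - tk k = (g (k+1) - g k) / ε (N - 1 - k) := by
    intro k hk
    rw [Finset.mem_range] at hk
    have hk' : k + 1 < (N - m) := by omega
    rw [hstepk k hk']
    field_simp [hεk k hk']
  rw [h1, Finset.sum_congr rfl h2]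
  rfl
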